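/- Let L ≥ 0 be a random variable with finite variance and r > 0 a constant, and set q = E[L]. Then 0 ≤ log(1 + q/(nr)) − E[log(1 + L/(nr))] ≤ SD(L)·SD(1/(nr + L)), for any n ≥ 1. -/

import Mathlib

open MeasureTheory ProbabilityTheory

lemma my_cauchy_schwarz_integral {Ω : Type*} [MeasurableSpace Ω] {μ : Measure Ω}
    {f g : Ω → ℝ} (hf : MemLp f 2 μ) (hg : MemLp g 2 μ) :
    ∫ ω, f ω * g ω ∂μ ≤ Real.sqrt (∫ ω, f ω ^ 2 ∂μ) * Real.sqrt (∫ ω, g ω ^ 2 ∂μ) := by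
  set F : Lp ℝ 2 μ := hf.toLp f with hF
  set G : Lp ℝ 2 μ := hg.toLp g with hG
  have hFf : (F : Ω → ℝ) =ᵐ[μ] f := hf.coeFn_toLp
  have hGg : (G : Ω → ℝ) =ᵐ[μ] g := hg.coeFn_toLp
  have h1 : inner (𝕜 := ℝ) F G = ∫ ω, f ω * g ω ∂μ := by
    rw [MeasureTheory.L2.inner_def]
    refine integral_congr_ae ?_
    filter_upwards [hFf, hGg] with ω h1 h2
    simp [h1, h2, mul_comm]
  have hFnorm : ‖F‖ = Real.sqrt (∫ ω, f ω ^ 2 ∂μ) := by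
    have h2 : inner (𝕜 := ℝ) F F = ∫ ω, f ω ^ 2 ∂μ := by
      rw [MeasureTheory.L2.inner_def]
      refine integral_congr_ae ?_
      filter_upwards [hFf] with ω h
      simp [h, sq]
    rw [← Real.sqrt_sq (norm_nonneg F), ← real_inner_self_eq_norm_sq, h2]
  have hGnorm : ‖G‖ = Real.sqrt (∫ ω, g ω ^ 2 ∂μ) := by
    have h2 : inner (𝕜 := ℝ) G G = ∫ ω, g ω ^ 2 ∂μ := by
      rw [MeasureTheory.L2.inner_def]
      refine integral_congr_ae ?_
      filter_upwards [hGg] with ω h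
      simp [h, sq]
    rw [← Real.sqrt_sq (norm_nonneg G), ← real_inner_self_eq_norm_sq, h2]
  calc ∫ ω, f ω * g ω ∂μ = inner (𝕜 := ℝ) F G := h1.symm
    _ ≤ ‖F‖ * ‖G‖ := real_inner_le_norm F G
    _ = _ := by rw [hFnorm, hGnorm]

theorem stmt_9 {Ω : Type*} [MeasurableSpace Ω] (μ : Measure Ω) [IsProbabilityMeasure μ]
    (L : Ω → ℝ) (hL_nonneg : ∀ᵐ ω ∂μ, 0 ≤ L ω) (hL : MemLp L 2 μ)
    (n : ℕ) (hn : 1 ≤ n) (r : ℝ) (hr : 0 < r) :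
    0 ≤ Real.log (1 + (μ[L]) / (n * r)) - μ[fun ω => Real.log (1 + L ω / (n * r))] ∧
      Real.log (1 + (μ[L]) / (n * r)) - μ[fun ω => Real.log (1 + L ω / (n * r))] ≤
        Real.sqrt (variance L μ) *
          Real.sqrt (variance (fun ω => ((n : ℝ) * r + L ω)⁻¹) μ) := by
  have hn' : (0:ℝ) < n := by exact_mod_cast Nat.lt_of_lt_of_le Nat.zero_lt_one hn
  set c : ℝ := (n : ℝ) * r with hc_def
  have hc : 0 < c := mul_pos hn' hr
  have hLint : Integrable L μ := hL.integrable one_le_two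
  set q : ℝ := μ[L] with hq_def
  have hq0 : 0 ≤ q := integral_nonneg_of_ae hL_nonneg
  have hcq : 0 < c + q := by linarith
  have hLm : AEMeasurable L μ := hL.aestronglyMeasurable.aemeasurable
  have hlog_eq : ∀ x : ℝ, 0 ≤ x → Real.log (1 + x / c) = Real.log (c + x) - Real.log c := by
    intro x hx
    rw [← Real.log_div (by positivity) hc.ne']
    congr 1
    field_simp
  have hφm : AEStronglyMeasurable (fun ω => Real.log (1 + L ω / c)) μ :=
    (Real.measurable_log.comp_aemeasurable ((hLm.div_const c).const_add 1)).aestronglyMeasurable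
  have hφint : Integrable (fun ω => Real.log (1 + L ω / c)) μ := by
    refine Integrable.mono' (hLint.div_const c) hφm ?_
    filter_upwards [hL_nonneg] with ω hω
    have h1 : (0:ℝ) ≤ L ω / c := div_nonneg hω hc.le
    rw [Real.norm_eq_abs, abs_of_nonneg (Real.log_nonneg (by linarith))]
    have h2 := Real.log_le_sub_one_of_pos (show (0:ℝ) < 1 + L ω / c by linarith)
    linarith
  -- first inequality
  have key1 : ∀ᵐ ω ∂μ, Real.log (1 + L ω / c) ≤ Real.log (1 + q / c) + (L ω - q) / (c + q) := by
    filter_upwards [hL_nonneg] with ω hω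
    have h1 : (0:ℝ) < c + L ω := by linarith
    have h2 := Real.log_le_sub_one_of_pos (show (0:ℝ) < (c + L ω) / (c + q) by positivity)
    rw [Real.log_div h1.ne' hcq.ne'] at h2
    rw [hlog_eq _ hω, hlog_eq _ hq0]
    have h3 : (c + L ω) / (c + q) - 1 = (L ω - q) / (c + q) := by field_simp; ring
    linarith
  have int_rhs : Integrable (fun ω => Real.log (1 + q / c) + (L ω - q) / (c + q)) μ :=
    (integrable_const _).add ((hLint.sub (integrable_const q)).div_const _)
  have hLq : ∫ ω, (L ω - q) ∂μ = 0 := by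
    rw [integral_sub hLint (integrable_const q)]
    simp [← hq_def]
  have h_first : ∫ ω, Real.log (1 + L ω / c) ∂μ ≤ Real.log (1 + q / c) := by
    calc ∫ ω, Real.log (1 + L ω / c) ∂μ
        ≤ ∫ ω, (Real.log (1 + q / c) + (L ω - q) / (c + q)) ∂μ :=
          integral_mono_ae hφint int_rhs key1
      _ = Real.log (1 + q / c) + (∫ ω, (L ω - q) ∂μ) / (c + q) := by
          have hsub : Integrable (fun ω => L ω - q) μ := hLint.sub (integrable_const q)
          have hdiv : Integrable (fun ω => (L ω - q) / (c + q)) μ := hsub.div_const _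
          rw [integral_add (integrable_const _) hdiv]
          simp [integral_div]
      _ = Real.log (1 + q / c) := by rw [hLq]; simp
  refine ⟨by linarith, ?_⟩
  -- second inequality
  set g : Ω → ℝ := fun ω => (c + L ω)⁻¹ with hg_def
  have hgm : AEStronglyMeasurable g μ := ((hLm.const_add c).inv).aestronglyMeasurable
  have hg2 : MemLp g 2 μ := by
    refine MemLp.of_bound hgm c⁻¹ ?_
    filter_upwards [hL_nonneg] with ω hω
    rw [Real.norm_eq_abs, abs_of_nonneg (inv_nonneg.2 (by linarith))]
    exact inv_anti₀ hc (by linarith)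
  have hgint : Integrable g μ := hg2.integrable one_le_two
  set m : ℝ := ∫ ω, g ω ∂μ with hm_def
  have hh2 : MemLp (fun ω => q - L ω) 2 μ := (memLp_const q).sub hL
  have hA : Integrable (fun ω => (q - L ω) * g ω) μ := by
    have h := hg2.smul (φ := fun ω => q - L ω) hh2
      (p := 2) (q := 2) (r := 1)
    rw [memLp_one_iff_integrable] at h
    exact h
  have hB : Integrable (fun ω => (q - L ω) * m) μ :=
    ((integrable_const q).sub hLint).mul_const m
  have hmul : Integrable (fun ω => (q - L ω) * (g ω - m)) μ := by
    refine (hA.sub hB).congr (ae_of_all _ fun ω => ?_)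
    simp only [Pi.sub_apply]
    ring
  have key2 : ∀ᵐ ω ∂μ,
      Real.log (1 + q / c) - Real.log (1 + L ω / c) ≤ (q - L ω) * g ω := by
    filter_upwards [hL_nonneg] with ω hω
    have h1 : (0:ℝ) < c + L ω := by linarith
    have h2 := Real.log_le_sub_one_of_pos (show (0:ℝ) < (c + q) / (c + L ω) by positivity)
    rw [Real.log_div hcq.ne' h1.ne'] at h2
    rw [hlog_eq _ hω, hlog_eq _ hq0]
    have h3 : (c + q) / (c + L ω) - 1 = (q - L ω) * (c + L ω)⁻¹ := by field_simp; ring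
    simp only [hg_def]
    linarith
  have hD : Real.log (1 + q / c) - ∫ ω, Real.log (1 + L ω / c) ∂μ
      = ∫ ω, (Real.log (1 + q / c) - Real.log (1 + L ω / c)) ∂μ := by
    rw [integral_sub (integrable_const _) hφint]
    simp
  have step1 : Real.log (1 + q / c) - ∫ ω, Real.log (1 + L ω / c) ∂μ
      ≤ ∫ ω, (q - L ω) * g ω ∂μ := by
    rw [hD]
    exact integral_mono_ae ((integrable_const _).sub hφint) hA key2
  have step2 : ∫ ω, (q - L ω) * g ω ∂μ = ∫ ω, (q - L ω) * (g ω - m) ∂μ := by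
    have h1 : ∫ ω, (q - L ω) * g ω ∂μ
        = ∫ ω, ((q - L ω) * (g ω - m) + (q - L ω) * m) ∂μ := by
      refine integral_congr_ae (ae_of_all _ fun ω => ?_)
      ring
    rw [h1, integral_add hmul hB, integral_mul_const]
    have h2 : ∫ ω, (q - L ω) ∂μ = 0 := by
      rw [integral_sub (integrable_const q) hLint]
      simp [← hq_def]
    rw [h2]
    ring
  have step3 : ∫ ω, (q - L ω) * (g ω - m) ∂μ
      ≤ Real.sqrt (∫ ω, (q - L ω) ^ 2 ∂μ) * Real.sqrt (∫ ω, (g ω - m) ^ 2 ∂μ) :=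
    my_cauchy_schwarz_integral hh2 (hg2.sub (memLp_const m))
  have hvarL : ∫ ω, (q - L ω) ^ 2 ∂μ = variance L μ := by
    rw [variance_eq_integral hL.aestronglyMeasurable.aemeasurable]
    refine integral_congr_ae (ae_of_all _ fun ω => ?_)
    simp only [Pi.pow_apply, Pi.sub_apply]
    rw [← hq_def]
    ring
  have hvarg : ∫ ω, (g ω - m) ^ 2 ∂μ = variance g μ := by
    rw [variance_eq_integral hgm.aemeasurable]
  calc Real.log (1 + q / c) - ∫ ω, Real.log (1 + L ω / c) ∂μ
      ≤ ∫ ω, (q - L ω) * (g ω - m) ∂μ := step2 ▸ step1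
    _ ≤ Real.sqrt (∫ ω, (q - L ω) ^ 2 ∂μ) * Real.sqrt (∫ ω, (g ω - m) ^ 2 ∂μ) := step3
    _ = Real.sqrt (variance L μ) * Real.sqrt (variance g μ) := by rw [hvarL, hvarg]
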